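/- arXiv:2107.00957 — 6 statements merged into one kernel-verified Lean document; each statement's English description precedes it below -/
import Mathlib

section
/- Let N be a positive integer and let y, y' ∈ (0,1)^N with δ_i = y'_i − y_i for each i. Let (X, X') be a pair of random vectors taking values in {0,1}^N × {0,1}^N such that for every i ∈ {1,…,N}: P(X_i = 1) = y_i; conditionally on X_i = 1, X'_i = 0 with probability max(−δ_i, 0)/y_i and X'_i = 1 otherwise; conditionally on X_i = 0, X'_i = 1 with probability max(δ_i, 0)/(1 − y_i) and X'_i = 0 otherwise. Then E[X'_i] = y'_i for every i ∈ {1,…,N}, and E[ ∑_{i=1}^{N} |X'_i − X_i| ] = ∑_{i=1}^{N} |y'_i − y_i|. -/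
open MeasureTheory

lemma int01_aux {Ω : Type*} [MeasurableSpace Ω] (μ : Measure Ω) [IsProbabilityMeasure μ]
    (Z : Ω → ℝ) (hm : Measurable Z) (h01 : ∀ ω, Z ω = 0 ∨ Z ω = 1) :
    Integrable Z μ ∧ ∫ ω, Z ω ∂μ = (μ {ω | Z ω = 1}).toReal := by
  have hs : MeasurableSet {ω | Z ω = 1} := hm (measurableSet_singleton 1)
  have hZ : Z = Set.indicator {ω | Z ω = 1} (fun _ => (1:ℝ)) := by
    funext ω
    rcases h01 ω with h | h <;> simp [Set.indicator, h]
  constructor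
  · rw [hZ]; exact (integrable_const 1).indicator hs
  · rw [hZ, integral_indicator_const (1:ℝ) hs]; simp; rfl

/-- **Coupled rounding (Theorem 1).**
Let `y, y' ∈ (0,1)^N` with `δ i = y' i - y i`.  Let `(X, X')` be a pair of random
`{0,1}^N`-valued vectors such that for every `i`: `P(X i = 1) = y i`; conditionally on
`X i = 1`, `X' i = 0` with probability `max (-δ i) 0 / y i` (and `X' i = 1` otherwise);
conditionally on `X i = 0`, `X' i = 1` with probability `max (δ i) 0 / (1 - y i)`
(and `X' i = 0` otherwise).  Then `E[X' i] = y' i` for every `i`, and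
`E[∑ i, |X' i - X i|] = ∑ i, |y' i - y i|`. -/
theorem coupled_rounding
    {Ω : Type*} [MeasurableSpace Ω] (μ : Measure Ω) [IsProbabilityMeasure μ]
    (N : ℕ) (hN : 0 < N)
    (y y' : Fin N → ℝ)
    (hy : ∀ i, y i ∈ Set.Ioo (0 : ℝ) 1)
    (hy' : ∀ i, y' i ∈ Set.Ioo (0 : ℝ) 1)
    (X X' : Ω → Fin N → ℝ)
    (hXmeas : ∀ i, Measurable fun ω => X ω i)
    (hX'meas : ∀ i, Measurable fun ω => X' ω i)
    (hX01 : ∀ ω i, X ω i = 0 ∨ X ω i = 1)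
    (hX'01 : ∀ ω i, X' ω i = 0 ∨ X' ω i = 1)
    (hmarg : ∀ i, μ {ω | X ω i = 1} = ENNReal.ofReal (y i))
    (hcond1 : ∀ i, μ ({ω | X' ω i = 0} ∩ {ω | X ω i = 1})
      = ENNReal.ofReal (max (-(y' i - y i)) 0 / y i) * μ {ω | X ω i = 1})
    (hcond0 : ∀ i, μ ({ω | X' ω i = 1} ∩ {ω | X ω i = 0})
      = ENNReal.ofReal (max (y' i - y i) 0 / (1 - y i)) * μ {ω | X ω i = 0}) :
    (∀ i, (∫ ω, X' ω i ∂μ) = y' i) ∧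
      (∫ ω, ∑ i, |X' ω i - X ω i| ∂μ) = ∑ i, |y' i - y i| := by
  -- per-index measure facts
  have hy1 : ∀ i, (0:ℝ) < y i := fun i => (hy i).1
  have hy2 : ∀ i, y i < 1 := fun i => (hy i).2
  have hsX : ∀ i, MeasurableSet {ω | X ω i = 1} := fun i => hXmeas i (measurableSet_singleton 1)
  have hsX' : ∀ i, MeasurableSet {ω | X' ω i = 1} := fun i => hX'meas i (measurableSet_singleton 1)
  have hX0c : ∀ i, {ω | X ω i = 0} = {ω | X ω i = 1}ᶜ := by
    intro i; ext ω; rcases hX01 ω i with h | h <;> simp [h]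
  have hX'0c : ∀ i, {ω | X' ω i = 0} = {ω | X' ω i = 1}ᶜ := by
    intro i; ext ω; rcases hX'01 ω i with h | h <;> simp [h]
  have hmarg0 : ∀ i, μ {ω | X ω i = 0} = ENNReal.ofReal (1 - y i) := by
    intro i
    rw [hX0c i, prob_compl_eq_one_sub (hsX i), hmarg i, ← ENNReal.ofReal_one,
      ← ENNReal.ofReal_sub _ (hy1 i).le]
  have hm1 : ∀ i, max (-(y' i - y i)) 0 ≤ y i := by
    intro i; exact max_le (by linarith [(hy' i).1]) (hy1 i).le
  have hm0 : ∀ i, max (y' i - y i) 0 ≤ 1 - y i := by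
    intro i; exact max_le (by linarith [(hy' i).2]) (by linarith [hy2 i])
  have h1 : ∀ i, μ ({ω | X' ω i = 0} ∩ {ω | X ω i = 1})
      = ENNReal.ofReal (max (-(y' i - y i)) 0) := by
    intro i
    rw [hcond1 i, hmarg i,
      ← ENNReal.ofReal_mul (div_nonneg (le_max_right _ _) (hy1 i).le)]
    congr 1
    rw [div_mul_cancel₀ _ (hy1 i).ne']
  have h0 : ∀ i, μ ({ω | X' ω i = 1} ∩ {ω | X ω i = 0})
      = ENNReal.ofReal (max (y' i - y i) 0) := by
    intro i
    rw [hcond0 i, hmarg0 i,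
      ← ENNReal.ofReal_mul (div_nonneg (le_max_right _ _) (by linarith [hy2 i]))]
    congr 1
    have h1y : (1 : ℝ) - y i ≠ 0 := by linarith [hy2 i]
    rw [div_mul_cancel₀ _ h1y]
  have h3 : ∀ i, μ ({ω | X' ω i = 1} ∩ {ω | X ω i = 1})
      = ENNReal.ofReal (y i - max (-(y' i - y i)) 0) := by
    intro i
    have key := measure_inter_add_diff {ω | X ω i = 1} (μ := μ) (hsX' i)
    have hdiff : {ω | X ω i = 1} \ {ω | X' ω i = 1} = {ω | X' ω i = 0} ∩ {ω | X ω i = 1} := by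
      rw [hX'0c i, Set.diff_eq, Set.inter_comm]
    rw [hdiff, h1 i, hmarg i, Set.inter_comm] at key
    have hfin : μ ({ω | X' ω i = 1} ∩ {ω | X ω i = 1}) ≠ ⊤ := measure_ne_top μ _
    rw [ENNReal.ofReal_sub _ (le_max_right _ _)]
    exact ENNReal.eq_sub_of_add_eq (by simp [ENNReal.ofReal_ne_top]) key
  have hX'1 : ∀ i, μ {ω | X' ω i = 1} = ENNReal.ofReal (y' i) := by
    intro i
    have key := measure_inter_add_diff {ω | X' ω i = 1} (μ := μ) (hsX i)
    have hdiff : {ω | X' ω i = 1} \ {ω | X ω i = 1} = {ω | X' ω i = 1} ∩ {ω | X ω i = 0} := by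
      rw [hX0c i, Set.diff_eq]
    rw [hdiff, h3 i, h0 i, ← ENNReal.ofReal_add (by linarith [hm1 i]) (le_max_right _ _)] at key
    rw [← key]
    congr 1
    rcases le_total 0 (y' i - y i) with h | h
    · rw [max_eq_right (by linarith), max_eq_left h]; ring
    · rw [max_eq_left (by linarith), max_eq_right h]; ring
  constructor
  · intro i
    rw [(int01_aux μ _ (hX'meas i) (fun ω => hX'01 ω i)).2, hX'1 i,
      ENNReal.toReal_ofReal (hy' i).1.le]
  · have habs01 : ∀ ω i, |X' ω i - X ω i| = 0 ∨ |X' ω i - X ω i| = 1 := by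
      intro ω i
      rcases hX01 ω i with h | h <;> rcases hX'01 ω i with h' | h' <;> simp [h, h'] <;> norm_num
    have hmabs : ∀ i, Measurable fun ω => |X' ω i - X ω i| :=
      fun i => ((hX'meas i).sub (hXmeas i)).abs
    have hint : ∀ i : Fin N, Integrable (fun ω => |X' ω i - X ω i|) μ :=
      fun i => (int01_aux μ _ (hmabs i) (fun ω => habs01 ω i)).1
    rw [integral_finset_sum _ (fun i _ => hint i)]
    refine Finset.sum_congr rfl fun i _ => ?_
    rw [(int01_aux μ _ (hmabs i) (fun ω => habs01 ω i)).2]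
    have hset : {ω | |X' ω i - X ω i| = 1}
        = ({ω | X' ω i = 1} ∩ {ω | X ω i = 0}) ∪ ({ω | X' ω i = 0} ∩ {ω | X ω i = 1}) := by
      ext ω
      rcases hX01 ω i with h | h <;> rcases hX'01 ω i with h' | h' <;> simp [h, h'] <;> norm_num
    have hdisj : Disjoint ({ω | X' ω i = 1} ∩ {ω | X ω i = 0})
        ({ω | X' ω i = 0} ∩ {ω | X ω i = 1}) := by
      apply Set.disjoint_left.2
      rintro ω ⟨h1', _⟩ ⟨h0', _⟩
      simp only [Set.mem_setOf_eq] at h1' h0'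
      rw [h0'] at h1'; norm_num at h1'
    have hms : MeasurableSet ({ω | X' ω i = 0} ∩ {ω | X ω i = 1}) := by
      rw [hX'0c i]; exact ((hsX' i).compl).inter (hsX i)
    rw [hset, measure_union hdisj hms, h0 i, h1 i,
      ← ENNReal.ofReal_add (le_max_right _ _) (le_max_right _ _),
      ENNReal.toReal_ofReal (by positivity)]
    rcases le_total 0 (y' i - y i) with h | h
    · rw [max_eq_left h, max_eq_right (by linarith), abs_of_nonneg h]; ring
    · rw [max_eq_right h, max_eq_left (by linarith), abs_of_nonpos h]; ring
end

section
/- Let T ≥ 2 be an integer, let ρ, η, L > 0, and let Φ be a differentiable convex function on an open convex set D ⊆ ℝ^N, with Bregman divergence D_Φ(a,b) = Φ(a) − Φ(b) − ⟨∇Φ(b), a − b⟩. Let y_1,…,y_T and z_2,…,z_T be points of D such that for every t ∈ {1,…,T−1}: (i) ∇Φ(z_{t+1}) = ∇Φ(y_t) + η g_t for some g_t ∈ ℝ^N with ‖g_t‖_∞ ≤ L; (ii) D_Φ(z_{t+1}, y_t) ≥ (ρ/2)‖z_{t+1} − y_t‖_1² and D_Φ(y_t, y_{t+1}) ≥ (ρ/2)‖y_t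 − y_{t+1}‖_1²; (iii) D_Φ(y_t, y_{t+1}) + D_Φ(y_{t+1}, z_{t+1}) ≤ D_Φ(y_t, z_{t+1}). Then ∑_{t=1}^{T−1} ‖y_{t+1} − y_t‖_1 ≤ (L η / ρ) T. -/
/-- First-order condition: Bregman divergence of a convex differentiable function
on an open convex set is nonnegative. -/
lemma bregman_nonneg {N : ℕ} {D : Set ((Fin N) → ℝ)} (hDopen : IsOpen D)
    {Φ : ((Fin N) → ℝ) → ℝ}
    (hΦdiff : DifferentiableOn ℝ Φ D) (hΦconv : ConvexOn ℝ D Φ)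
    {a b : (Fin N) → ℝ} (ha : a ∈ D) (hb : b ∈ D) :
    fderiv ℝ Φ b (a - b) ≤ Φ a - Φ b := by
  set A := AffineMap.lineMap (k := ℝ) b a with hA
  have hAeq : ∀ s : ℝ, A s = b + s • (a - b) := by
    intro s
    rw [hA]
    refine (AffineMap.lineMap_apply_module b a s).trans ?_
    rw [sub_smul, one_smul, smul_sub]
    abel
  have hconv : ConvexOn ℝ (A ⁻¹' D) (Φ ∘ A) := hΦconv.comp_affineMap A
  have h0 : (0 : ℝ) ∈ A ⁻¹' D := by
    simp only [Set.mem_preimage, hAeq, zero_smul, add_zero]; exact hb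
  have h1 : (1 : ℝ) ∈ A ⁻¹' D := by
    simp only [Set.mem_preimage, hAeq, one_smul]
    simpa using ha
  have hΦb : DifferentiableAt ℝ Φ b := hΦdiff.differentiableAt (hDopen.mem_nhds hb)
  have hline : HasDerivAt (fun s : ℝ => b + s • (a - b)) (a - b) 0 := by
    simpa using ((hasDerivAt_id (0 : ℝ)).smul_const (a - b)).const_add b
  have hb0 : b + (0 : ℝ) • (a - b) = b := by simp
  have hΦ' : HasFDerivAt Φ (fderiv ℝ Φ b) (b + (0 : ℝ) • (a - b)) := by
    rw [hb0]; exact hΦb.hasFDerivAt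
  have hcomp : HasDerivAt (Φ ∘ A) (fderiv ℝ Φ b (a - b)) 0 := by
    have h := hΦ'.comp_hasDerivAt 0 hline
    have heq : (Φ ∘ A) = fun s : ℝ => Φ (b + s • (a - b)) := by
      funext s; simp [Function.comp, hAeq]
    rw [heq]; exact h
  have hslope := hconv.le_slope_of_hasDerivAt h0 h1 one_pos hcomp
  have : slope (Φ ∘ A) 0 1 = Φ a - Φ b := by
    have hA0 : A (0 : ℝ) = b := by rw [hAeq]; simp
    have hA1 : A (1 : ℝ) = a := by rw [hAeq]; simp
    simp [slope_def_field, Function.comp, hA0, hA1]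
  linarith [hslope, this.le, this.ge]

/-- **Movement bound for online mirror ascent iterates (Theorem 2).**
Let `T ≥ 2`, `ρ, η, L > 0`, and `Φ` a differentiable convex function on an open convex
set `D ⊆ ℝ^N`, with Bregman divergence `DΦ a b = Φ a - Φ b - ⟨∇Φ b, a - b⟩`.
Let `y 1, …, y T` and `z 2, …, z T` be points of `D` such that for every
`t ∈ {1, …, T-1}`:
(i) `∇Φ (z (t+1)) = ∇Φ (y t) + η • g t` for some `g t` with `‖g t‖_∞ ≤ L`;
(ii) `DΦ (z (t+1)) (y t) ≥ (ρ/2) ‖z (t+1) - y t‖₁²` and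
     `DΦ (y t) (y (t+1)) ≥ (ρ/2) ‖y t - y (t+1)‖₁²`;
(iii) `DΦ (y t) (y (t+1)) + DΦ (y (t+1)) (z (t+1)) ≤ DΦ (y t) (z (t+1))`.
Then `∑_{t=1}^{T-1} ‖y (t+1) - y t‖₁ ≤ (L η / ρ) T`. -/
theorem oma_movement_bound
    (N : ℕ) (T : ℕ) (hT : 2 ≤ T)
    (ρ η L : ℝ) (hρ : 0 < ρ) (hη : 0 < η) (hL : 0 < L)
    (D : Set ((Fin N) → ℝ)) (hDopen : IsOpen D) (hDconv : Convex ℝ D)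
    (Φ : ((Fin N) → ℝ) → ℝ)
    (hΦdiff : DifferentiableOn ℝ Φ D) (hΦconv : ConvexOn ℝ D Φ)
    (DΦ : ((Fin N) → ℝ) → ((Fin N) → ℝ) → ℝ)
    (hDΦ : ∀ a b, DΦ a b = Φ a - Φ b - fderiv ℝ Φ b (a - b))
    (y z : ℕ → (Fin N) → ℝ) (g : ℕ → (Fin N) → ℝ)
    (hyD : ∀ t ∈ Finset.Icc 1 T, y t ∈ D)
    (hzD : ∀ t ∈ Finset.Icc 2 T, z t ∈ D)
    (hgrad : ∀ t ∈ Finset.Icc 1 (T - 1), ∀ v : (Fin N) → ℝ,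
      fderiv ℝ Φ (z (t + 1)) v = fderiv ℝ Φ (y t) v + η * ∑ i, g t i * v i)
    (hgbound : ∀ t ∈ Finset.Icc 1 (T - 1), ∀ i, |g t i| ≤ L)
    (hstrong₁ : ∀ t ∈ Finset.Icc 1 (T - 1),
      ρ / 2 * (∑ i, |z (t + 1) i - y t i|) ^ 2 ≤ DΦ (z (t + 1)) (y t))
    (hstrong₂ : ∀ t ∈ Finset.Icc 1 (T - 1),
      ρ / 2 * (∑ i, |y t i - y (t + 1) i|) ^ 2 ≤ DΦ (y t) (y (t + 1)))
    (hpyth : ∀ t ∈ Finset.Icc 1 (T - 1),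
      DΦ (y t) (y (t + 1)) + DΦ (y (t + 1)) (z (t + 1)) ≤ DΦ (y t) (z (t + 1))) :
    ∑ t ∈ Finset.Icc 1 (T - 1), (∑ i, |y (t + 1) i - y t i|) ≤ L * η / ρ * T := by
  -- per-step bound
  have key : ∀ t ∈ Finset.Icc 1 (T - 1),
      (∑ i, |y (t + 1) i - y t i|) ≤ L * η / ρ := by
    intro t ht
    obtain ⟨ht1, ht2⟩ := Finset.mem_Icc.mp ht
    have hytD : y t ∈ D := hyD t (Finset.mem_Icc.mpr ⟨ht1, by omega⟩)
    have hyt1D : y (t + 1) ∈ D := hyD (t + 1) (Finset.mem_Icc.mpr ⟨by omega, by omega⟩)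
    have hztD : z (t + 1) ∈ D := hzD (t + 1) (Finset.mem_Icc.mpr ⟨by omega, by omega⟩)
    set u := ∑ i, |y t i - y (t + 1) i| with hu
    set v := ∑ i, |z (t + 1) i - y t i| with hv
    have hu0 : 0 ≤ u := Finset.sum_nonneg fun i _ => abs_nonneg _
    have hv0 : 0 ≤ v := Finset.sum_nonneg fun i _ => abs_nonneg _
    -- inner product bounds
    have hip : ∀ w : (Fin N) → ℝ, (∑ i, g t i * w i) ≤ L * ∑ i, |w i| := by
      intro w
      calc (∑ i, g t i * w i) ≤ ∑ i, |g t i * w i| :=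
            Finset.sum_le_sum fun i _ => le_abs_self _
        _ ≤ ∑ i, L * |w i| := Finset.sum_le_sum fun i _ => by
            rw [abs_mul]
            exact mul_le_mul_of_nonneg_right (hgbound t ht i) (abs_nonneg _)
        _ = L * ∑ i, |w i| := by rw [Finset.mul_sum]
    -- D(y t, z) + D(z, y t) = η * ⟨g, z - y t⟩
    have hsum : DΦ (y t) (z (t + 1)) + DΦ (z (t + 1)) (y t)
        = η * ∑ i, g t i * (z (t + 1) i - y t i) := by
      rw [hDΦ, hDΦ]
      have h1 := hgrad t ht (z (t + 1) - y t)
      have h2 : (y t - z (t + 1)) = -(z (t + 1) - y t) := by abel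
      rw [h2, map_neg]
      simp only [Pi.sub_apply] at h1
      linarith
    -- D(y t, z) ≤ L η v - ρ/2 v²
    have hDyz : DΦ (y t) (z (t + 1)) ≤ L * η * v - ρ / 2 * v ^ 2 := by
      have h1 := hstrong₁ t ht
      have h2 := hip (fun i => z (t + 1) i - y t i)
      have : (∑ i, g t i * (z (t + 1) i - y t i)) ≤ L * v := h2
      nlinarith [hη.le]
    -- D(y (t+1), z) ≥ 0
    have hDnn : 0 ≤ DΦ (y (t + 1)) (z (t + 1)) := by
      rw [hDΦ]
      have := bregman_nonneg hDopen hΦdiff hΦconv hyt1D hztD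
      linarith
    -- chain
    have hchain : ρ / 2 * u ^ 2 ≤ L * η * v - ρ / 2 * v ^ 2 := by
      have h1 := hstrong₂ t ht
      have h2 := hpyth t ht
      linarith
    have hc : ρ / 2 * (L * η / ρ) ^ 2 = η ^ 2 * L ^ 2 / (2 * ρ) := by
      field_simp
    have hsq : ρ / 2 * u ^ 2 ≤ ρ / 2 * (L * η / ρ) ^ 2 := by
      rw [hc]
      refine hchain.trans ?_
      rw [le_div_iff₀ (by positivity : (0:ℝ) < 2 * ρ)]
      nlinarith [sq_nonneg (ρ * v - η * L)]
    have hu2 : u ^ 2 ≤ (L * η / ρ) ^ 2 :=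
      le_of_mul_le_mul_left (by linarith) (by positivity : (0:ℝ) < ρ / 2)
    have hfin : u ≤ L * η / ρ := by
      have hcpos : (0:ℝ) ≤ L * η / ρ := by positivity
      nlinarith [hu2, hu0, hcpos]
    calc (∑ i, |y (t + 1) i - y t i|) = u := by
          rw [hu]; exact Finset.sum_congr rfl fun i _ => abs_sub_comm _ _
      _ ≤ L * η / ρ := hfin
  have hcard : (Finset.Icc 1 (T - 1)).card = T - 1 := by
    rw [Nat.card_Icc]; omega
  have hpos : 0 ≤ L * η / ρ := le_of_lt (div_pos (mul_pos hL hη) hρ)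
  calc ∑ t ∈ Finset.Icc 1 (T - 1), (∑ i, |y (t + 1) i - y t i|)
      ≤ ∑ t ∈ Finset.Icc 1 (T - 1), (L * η / ρ) := Finset.sum_le_sum key
    _ = (T - 1 : ℕ) * (L * η / ρ) := by rw [Finset.sum_const, hcard, nsmul_eq_mul]
    _ ≤ T * (L * η / ρ) := by
        apply mul_le_mul_of_nonneg_right _ hpos
        exact_mod_cast Nat.sub_le T 1
    _ = L * η / ρ * T := by ring
end

section
/- Let ρ, η, L > 0 and let Φ be a differentiable convex function on an open convex set D ⊆ ℝ^N, with Bregman divergence D_Φ(a,b) = Φ(a) − Φ(b) − ⟨∇Φ(b), a − b⟩. Let y, z ∈ D and g ∈ ℝ^N satisfy ∇Φ(z) = ∇Φ(y) + η g, ‖g‖_∞ ≤ L, and D_Φ(z, y) ≥ (ρ/2)‖z − y‖_1². Then D_Φ(y, z) ≤ η² L² / (2ρ). -/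
/-- **One-step Bregman bound for a mirror step.**
Let `ρ, η, L > 0` and `Φ` a differentiable convex function on an open convex set
`D ⊆ ℝ^N`, with Bregman divergence `DΦ a b = Φ a - Φ b - ⟨∇Φ b, a - b⟩`.
If `y, z ∈ D` and `g ∈ ℝ^N` satisfy `∇Φ z = ∇Φ y + η • g`, `‖g‖_∞ ≤ L`, and
`DΦ z y ≥ (ρ/2) ‖z - y‖₁²`, then `DΦ y z ≤ η² L² / (2 ρ)`. -/
theorem mirror_step_bregman_bound
    (N : ℕ) (ρ η L : ℝ) (hρ : 0 < ρ) (hη : 0 < η) (hL : 0 < L)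
    (D : Set ((Fin N) → ℝ)) (hDopen : IsOpen D) (hDconv : Convex ℝ D)
    (Φ : ((Fin N) → ℝ) → ℝ)
    (hΦdiff : DifferentiableOn ℝ Φ D) (hΦconv : ConvexOn ℝ D Φ)
    (DΦ : ((Fin N) → ℝ) → ((Fin N) → ℝ) → ℝ)
    (hDΦ : ∀ a b, DΦ a b = Φ a - Φ b - fderiv ℝ Φ b (a - b))
    (y z : (Fin N) → ℝ) (g : (Fin N) → ℝ)
    (hyD : y ∈ D) (hzD : z ∈ D)
    (hgrad : ∀ v : (Fin N) → ℝ,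
      fderiv ℝ Φ z v = fderiv ℝ Φ y v + η * ∑ i, g i * v i)
    (hgbound : ∀ i, |g i| ≤ L)
    (hstrong : ρ / 2 * (∑ i, |z i - y i|) ^ 2 ≤ DΦ z y) :
    DΦ y z ≤ η ^ 2 * L ^ 2 / (2 * ρ) := by
  set s : ℝ := ∑ i, |z i - y i| with hs
  -- fderiv linearity: (y - z) = -(z - y)
  have hneg : fderiv ℝ Φ y (y - z) = - fderiv ℝ Φ y (z - y) := by
    rw [show y - z = -(z - y) by abel, map_neg]
  -- key identity
  have hsum : DΦ y z + DΦ z y = η * ∑ i, g i * (z i - y i) := by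
    rw [hDΦ, hDΦ, hgrad (y - z), hneg]
    have : ∑ i, g i * (y - z) i = - ∑ i, g i * (z i - y i) := by
      rw [← Finset.sum_neg_distrib]
      refine Finset.sum_congr rfl fun i _ => ?_
      simp [Pi.sub_apply]; ring
    rw [this]; ring
  -- bound the inner product
  have hip : ∑ i, g i * (z i - y i) ≤ L * s := by
    rw [hs, Finset.mul_sum]
    refine Finset.sum_le_sum fun i _ => ?_
    calc g i * (z i - y i) ≤ |g i * (z i - y i)| := le_abs_self _
      _ = |g i| * |z i - y i| := abs_mul _ _
      _ ≤ L * |z i - y i| := by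
          exact mul_le_mul_of_nonneg_right (hgbound i) (abs_nonneg _)
  have hDyz : DΦ y z ≤ η * (L * s) - ρ / 2 * s ^ 2 := by
    have := mul_le_mul_of_nonneg_left hip hη.le
    linarith [hsum, hstrong]
  have hkey : η * (L * s) - ρ / 2 * s ^ 2 ≤ η ^ 2 * L ^ 2 / (2 * ρ) := by
    rw [le_div_iff₀ (by positivity)]
    nlinarith [sq_nonneg (ρ * s - η * L), hρ]
  linarith
end

section
/- For every fractional cache state y, the auxiliary gain is a lower bound on the caching gain: L(y) ≤ G(y). -/
namespace ACAI

/-- `sigma N π i` = number of indices `j ∈ {1,…,i}` with `π j > N`, i.e. the number of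
objects among the `i` cheapest that are served from the server. -/
def sigma (N : ℕ) (π : ℕ → ℕ) (i : ℕ) : ℕ :=
  ((Finset.Icc 1 i).filter (fun j => N < π j)).card

/-- `Kmin N k π` = least index `i` with `sigma N π i = k`. -/
noncomputable def Kmin (N k : ℕ) (π : ℕ → ℕ) : ℕ :=
  sInf {i | sigma N π i = k}

/-- `alpha c π i = c (π (i+1)) - c (π i)`. -/
noncomputable def alpha (c : ℕ → ℝ) (π : ℕ → ℕ) (i : ℕ) : ℝ :=
  c (π (i + 1)) - c (π i)

/-- A fractional cache state: `y ∈ [0,1]^{2N}` with `∑_{i=1}^{N} y i = h` and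
`y (i+N) = 1 - y i` for `i ∈ {1,…,N}`. -/
def IsFrac (N h : ℕ) (y : ℕ → ℝ) : Prop :=
  (∀ i ∈ Finset.Icc 1 (2 * N), y i ∈ Set.Icc (0 : ℝ) 1) ∧
  (∑ i ∈ Finset.Icc 1 N, y i = (h : ℝ)) ∧
  (∀ i ∈ Finset.Icc 1 N, y (i + N) = 1 - y i)

/-- An integral cache state: a fractional cache state with `{0,1}` coordinates. -/
def IsInt (N h : ℕ) (y : ℕ → ℝ) : Prop :=
  IsFrac N h y ∧ ∀ i ∈ Finset.Icc 1 (2 * N), y i = 0 ∨ y i = 1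

/-- A request over the augmented catalog `U = {1,…,2N}`: nonnegative costs `c` with
`c (i+N) = c i + cf` for catalog objects `i ∈ {1,…,N}`, and a bijection `π` of
`{1,…,2N}` sorting the costs nondecreasingly and placing each `i ∈ {1,…,N}` before
`i + N`. -/
def Request (N : ℕ) (cf : ℝ) (c : ℕ → ℝ) (π : ℕ → ℕ) : Prop :=
  (∀ i ∈ Finset.Icc 1 (2 * N), 0 ≤ c i) ∧
  (∀ i ∈ Finset.Icc 1 N, c (i + N) = c i + cf) ∧
  Set.BijOn π (Set.Icc 1 (2 * N)) (Set.Icc 1 (2 * N)) ∧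
  (∀ i, 1 ≤ i → i < 2 * N → c (π i) ≤ c (π (i + 1))) ∧
  (∀ j l, j ∈ Set.Icc 1 (2 * N) → l ∈ Set.Icc 1 (2 * N) →
    π j ≤ N → π l = π j + N → j < l)

/-- The caching gain
`G(y) = ∑_{i=1}^{K-1} α_i · min { k - σ_i, (∑_{j=1}^{i} y_{π j}) - σ_i }`. -/
noncomputable def gain (N k : ℕ) (c : ℕ → ℝ) (π : ℕ → ℕ) (y : ℕ → ℝ) : ℝ :=
  ∑ i ∈ Finset.Icc 1 (Kmin N k π - 1),
    alpha c π i *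
      min ((k : ℝ) - sigma N π i) ((∑ j ∈ Finset.Icc 1 i, y (π j)) - sigma N π i)

open Classical in
/-- `Iset N π i = { j ∈ {1,…,i} : π j ≤ N and π j + N ∉ {π 1, …, π i} }`. -/
noncomputable def Iset (N : ℕ) (π : ℕ → ℕ) (i : ℕ) : Finset ℕ :=
  (Finset.Icc 1 i).filter (fun j => π j ≤ N ∧ ∀ l ∈ Finset.Icc 1 i, π l ≠ π j + N)

/-- The auxiliary (multilinear) gain
`L(y) = ∑_{i=1}^{K-1} α_i (k - σ_i) (1 - ∏_{j ∈ I_i} (1 - y_{π j}/(k - σ_i)))`. -/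
noncomputable def aux (N k : ℕ) (c : ℕ → ℝ) (π : ℕ → ℕ) (y : ℕ → ℝ) : ℝ :=
  ∑ i ∈ Finset.Icc 1 (Kmin N k π - 1),
    alpha c π i * ((k : ℝ) - sigma N π i) *
      (1 - ∏ j ∈ Iset N π i, (1 - y (π j) / ((k : ℝ) - sigma N π i)))

/-- Weierstrass product inequality. -/
lemma one_sub_sum_le_prod_one_sub' (s : Finset ℕ) (f : ℕ → ℝ)
    (h0 : ∀ j ∈ s, 0 ≤ f j) (h1 : ∀ j ∈ s, f j ≤ 1) :
    1 - ∑ j ∈ s, f j ≤ ∏ j ∈ s, (1 - f j) := by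
  classical
  induction s using Finset.induction_on with
  | empty => simp
  | @insert a s ha ih =>
    rw [Finset.sum_insert ha, Finset.prod_insert ha]
    have h0' : ∀ j ∈ s, 0 ≤ f j := fun j hj => h0 j (Finset.mem_insert_of_mem hj)
    have h1' : ∀ j ∈ s, f j ≤ 1 := fun j hj => h1 j (Finset.mem_insert_of_mem hj)
    have hih := ih h0' h1'
    have hfa0 : 0 ≤ f a := h0 a (Finset.mem_insert_self a s)
    have hfa1 : f a ≤ 1 := h1 a (Finset.mem_insert_self a s)
    have hs0 : 0 ≤ ∑ j ∈ s, f j := Finset.sum_nonneg h0'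
    nlinarith [hih, hfa0, hfa1, hs0]

/-- Discrete IVT for step-1 functions. -/
lemma exists_eq_of_step (f : ℕ → ℕ) (h0 : f 0 = 0)
    (hstep : ∀ n, f (n + 1) ≤ f n + 1) :
    ∀ n v, v ≤ f n → ∃ i ≤ n, f i = v := by
  intro n
  induction n with
  | zero => intro v hv; exact ⟨0, le_refl 0, by omega⟩
  | succ n ih =>
    intro v hv
    by_cases hc : v ≤ f n
    · obtain ⟨i, hi, hfi⟩ := ih v hc
      exact ⟨i, hi.trans (Nat.le_succ n), hfi⟩
    · exact ⟨n + 1, le_refl _, by have := hstep n; omega⟩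

/-- **Lower bound (Proposition 1, first inequality).**
For every fractional cache state `y`, the auxiliary gain is a lower bound on the
caching gain: `L(y) ≤ G(y)`. -/

theorem aux_le_gain
    (N k h : ℕ) (hN : 0 < N) (hk : 0 < k) (hkh : k ≤ h) (hhN : h ≤ N)
    (cf : ℝ) (hcf : 0 < cf) (c : ℕ → ℝ) (π : ℕ → ℕ)
    (hreq : Request N cf c π)
    (y : ℕ → ℝ) (hy : IsFrac N h y) :
    aux N k c π y ≤ gain N k c π y := by
  classical
  obtain ⟨hc0, hcN, hbij, hmono, hord⟩ := hreq
  obtain ⟨hy01, hysum, hyN⟩ := hy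
  -- basic facts about sigma
  have hσmono : Monotone (sigma N π) := by
    intro a b hab
    exact Finset.card_le_card
      (Finset.filter_subset_filter _ (Finset.Icc_subset_Icc_right hab))
  have hσ0 : sigma N π 0 = 0 := by simp [sigma]
  have hσstep : ∀ n, sigma N π (n + 1) ≤ sigma N π n + 1 := by
    intro n
    unfold sigma
    have : Finset.Icc 1 (n + 1) ⊆ insert (n + 1) (Finset.Icc 1 n) := by
      intro x hx
      simp only [Finset.mem_Icc, Finset.mem_insert] at *
      omega
    calc ((Finset.Icc 1 (n+1)).filter (fun j => N < π j)).card
        ≤ ((insert (n+1) (Finset.Icc 1 n)).filter (fun j => N < π j)).card :=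
          Finset.card_le_card (Finset.filter_subset_filter _ this)
      _ ≤ ((Finset.Icc 1 n).filter (fun j => N < π j)).card + 1 := by
          rw [Finset.filter_insert]
          split
          · exact Finset.card_insert_le _ _
          · omega
  have hσ2N : sigma N π (2 * N) = N := by
    unfold sigma
    have hcard : ((Finset.Icc 1 (2 * N)).filter (fun j => N < π j)).card
        = (Finset.Icc (N + 1) (2 * N)).card := by
      apply Finset.card_nbij π
      · intro a ha
        simp only [Finset.coe_filter, Finset.coe_Icc, Set.mem_setOf_eq, Set.mem_Icc, Finset.mem_filter, Finset.mem_Icc] at ha ⊢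
        have := hbij.mapsTo (show a ∈ Set.Icc 1 (2 * N) by
          simp [Set.mem_Icc]; omega)
        simp only [Set.mem_Icc] at this
        omega
      · intro a ha b hb hab
        simp only [Finset.coe_filter, Set.mem_setOf_eq, Finset.mem_Icc] at ha hb
        exact hbij.injOn (by simp [Set.mem_Icc]; omega) (by simp [Set.mem_Icc]; omega) hab
      · intro b hb
        simp only [Finset.coe_Icc, Set.mem_Icc] at hb
        obtain ⟨a, ha, hab⟩ := hbij.surjOn (show b ∈ Set.Icc 1 (2 * N) by
          simp [Set.mem_Icc]; omega)
        simp only [Set.mem_Icc] at ha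
        refine ⟨a, ?_, hab⟩
        simp only [Finset.coe_filter, Set.mem_setOf_eq, Finset.mem_Icc]
        exact ⟨⟨ha.1, ha.2⟩, by omega⟩
    rw [hcard, Nat.card_Icc]
    omega
  -- Kmin facts
  have hexK : ∃ i, i ≤ 2 * N ∧ sigma N π i = k := by
    obtain ⟨i, hi, hfi⟩ := exists_eq_of_step (sigma N π) hσ0 hσstep (2 * N) k
      (by omega)
    exact ⟨i, hi, hfi⟩
  obtain ⟨i0, hi0, hσi0⟩ := hexK
  have hKne : {i | sigma N π i = k}.Nonempty := ⟨i0, hσi0⟩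
  have hKmem : sigma N π (Kmin N k π) = k := Nat.sInf_mem hKne
  have hK2N : Kmin N k π ≤ 2 * N := by
    have : Kmin N k π ≤ i0 := Nat.sInf_le hσi0
    omega
  have hKpos : 1 ≤ Kmin N k π := by
    rcases Nat.eq_zero_or_pos (Kmin N k π) with h' | h'
    · rw [h', hσ0] at hKmem; omega
    · omega
  have hσlt : ∀ i, i < Kmin N k π → sigma N π i < k := by
    intro i hi
    have hle : sigma N π i ≤ k := hKmem ▸ hσmono hi.le
    rcases lt_or_eq_of_le hle with h' | h'
    · exact h'
    · have hle2 : Kmin N k π ≤ i := Nat.sInf_le h'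
      omega
  -- termwise comparison
  unfold aux gain
  apply Finset.sum_le_sum
  intro i hi
  rw [Finset.mem_Icc] at hi
  obtain ⟨hi1, hi2⟩ := hi
  have hiK : i < Kmin N k π := by omega
  have hi2N : i < 2 * N := by omega
  have hα : 0 ≤ alpha c π i := sub_nonneg.mpr (hmono i hi1 hi2N)
  have hσik : sigma N π i < k := hσlt i hiK
  set m : ℝ := (k : ℝ) - sigma N π i with hm_def
  have hm1 : (1 : ℝ) ≤ m := by
    have : (sigma N π i : ℝ) + 1 ≤ (k : ℝ) := by exact_mod_cast hσik
    simp [hm_def]; linarith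
  have hm0 : (0 : ℝ) < m := lt_of_lt_of_le one_pos hm1
  -- membership facts
  have hπmem : ∀ j ∈ Finset.Icc 1 i, π j ∈ Set.Icc 1 (2 * N) := by
    intro j hj
    rw [Finset.mem_Icc] at hj
    exact hbij.mapsTo (by simp [Set.mem_Icc]; omega)
  have hy0 : ∀ j ∈ Finset.Icc 1 i, 0 ≤ y (π j) := by
    intro j hj
    have := hy01 (π j) (by
      have := hπmem j hj; rw [Set.mem_Icc] at this
      rw [Finset.mem_Icc]; omega)
    exact this.1
  have hy1 : ∀ j ∈ Finset.Icc 1 i, y (π j) ≤ 1 := by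
    intro j hj
    have := hy01 (π j) (by
      have := hπmem j hj; rw [Set.mem_Icc] at this
      rw [Finset.mem_Icc]; omega)
    exact this.2
  -- key combinatorial inequality
  have hIT : Iset N π i ⊆ Finset.Icc 1 i := by
    intro j hj; simp only [Iset, Finset.mem_filter] at hj; exact hj.1
  set B : Finset ℕ := (Finset.Icc 1 i).filter (fun j => N < π j) with hB_def
  have hσB : sigma N π i = B.card := rfl
  have hBsub : B ⊆ Finset.Icc 1 i \ Iset N π i := by
    intro j hj
    rw [hB_def, Finset.mem_filter] at hj
    rw [Finset.mem_sdiff]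
    refine ⟨hj.1, ?_⟩
    simp only [Iset, Finset.mem_filter]
    push_neg
    intro _
    intro hcon
    omega
  -- the partner map
  have hexφ : ∀ j, ∃ l, j ∈ B →
      (π l = π j - N ∧ l ∈ (Finset.Icc 1 i \ Iset N π i) \ B) := by
    intro j
    by_cases hjB : j ∈ B
    · rw [hB_def, Finset.mem_filter, Finset.mem_Icc] at hjB
      obtain ⟨⟨hj1, hji⟩, hjN⟩ := hjB
      have hπj : π j ∈ Set.Icc 1 (2 * N) :=
        hbij.mapsTo (by simp [Set.mem_Icc]; omega)
      rw [Set.mem_Icc] at hπj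
      have haIcc : π j - N ∈ Set.Icc 1 (2 * N) := by simp [Set.mem_Icc]; omega
      obtain ⟨l, hl, hla⟩ := hbij.surjOn haIcc
      rw [Set.mem_Icc] at hl
      refine ⟨l, fun _ => ⟨hla, ?_⟩⟩
      have hπlN : π l ≤ N := by omega
      have hπjl : π j = π l + N := by omega
      have hlj : l < j := hord l j (by simp [Set.mem_Icc]; omega)
        (by simp [Set.mem_Icc]; omega) hπlN (by omega)
      rw [Finset.mem_sdiff, Finset.mem_sdiff]
      refine ⟨⟨by rw [Finset.mem_Icc]; omega, ?_⟩, ?_⟩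
      · simp only [Iset, Finset.mem_filter]
        push_neg
        intro _ _
        exact ⟨j, by rw [Finset.mem_Icc]; omega, by omega⟩
      · rw [hB_def, Finset.mem_filter]
        push_neg
        intro _
        omega
    · exact ⟨0, fun h' => absurd h' hjB⟩
  choose φ hφ using hexφ
  have hφπ : ∀ j ∈ B, π (φ j) = π j - N := fun j hj => (hφ j hj).1
  have hφmem : ∀ j ∈ B, φ j ∈ (Finset.Icc 1 i \ Iset N π i) \ B :=
    fun j hj => (hφ j hj).2
  have hφinj : ∀ j₁ ∈ B, ∀ j₂ ∈ B, φ j₁ = φ j₂ → j₁ = j₂ := by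
    intro j₁ hj₁ j₂ hj₂ heq
    have h1 := hφπ j₁ hj₁
    have h2 := hφπ j₂ hj₂
    rw [hB_def, Finset.mem_filter, Finset.mem_Icc] at hj₁ hj₂
    have hππ : π j₁ = π j₂ := by
      rw [heq] at h1
      omega
    exact hbij.injOn (by simp [Set.mem_Icc]; omega) (by simp [Set.mem_Icc]; omega) hππ
  -- handle missing y values via pairing
  have hyBpair : ∀ j ∈ B, y (π j) = 1 - y (π (φ j)) := by
    intro j hj
    have hπφ := hφπ j hj
    rw [hB_def, Finset.mem_filter, Finset.mem_Icc] at hj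
    have hπj : π j ∈ Set.Icc 1 (2 * N) :=
      hbij.mapsTo (by simp [Set.mem_Icc]; omega)
    rw [Set.mem_Icc] at hπj
    have ha : π j - N ∈ Finset.Icc 1 N := by rw [Finset.mem_Icc]; omega
    have := hyN (π j - N) ha
    rw [hπφ]
    have hrw : π j - N + N = π j := by omega
    rw [hrw] at this
    linarith [this]
  -- sum over complement is at least sigma
  have hcompl : (sigma N π i : ℝ) ≤ ∑ j ∈ Finset.Icc 1 i \ Iset N π i, y (π j) := by
    have hsplit : ∑ j ∈ Finset.Icc 1 i \ Iset N π i, y (π j)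
        = ∑ j ∈ B, y (π j) + ∑ j ∈ (Finset.Icc 1 i \ Iset N π i) \ B, y (π j) := by
      rw [← Finset.sum_sdiff hBsub]; ring
    have himg : ∑ j ∈ B, y (π (φ j)) = ∑ l ∈ B.image φ, y (π l) :=
      (Finset.sum_image (f := fun l => y (π l)) hφinj).symm
    have himgsub : B.image φ ⊆ (Finset.Icc 1 i \ Iset N π i) \ B := by
      intro l hl
      rw [Finset.mem_image] at hl
      obtain ⟨j, hj, hjl⟩ := hl
      exact hjl ▸ hφmem j hj
    have hrest : ∑ l ∈ B.image φ, y (π l)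
        ≤ ∑ j ∈ (Finset.Icc 1 i \ Iset N π i) \ B, y (π j) := by
      apply Finset.sum_le_sum_of_subset_of_nonneg himgsub
      intro j hj _
      rw [Finset.mem_sdiff, Finset.mem_sdiff] at hj
      exact hy0 j hj.1.1
    have hBsum : ∑ j ∈ B, y (π j) = B.card - ∑ j ∈ B, y (π (φ j)) := by
      rw [Finset.sum_congr rfl hyBpair, Finset.sum_sub_distrib]
      simp
    rw [hsplit, hBsum, hσB]
    push_cast
    linarith [himg ▸ hrest]
  -- sum over Iset is at most total minus sigma
  have hIsum : ∑ j ∈ Iset N π i, y (π j)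
      ≤ (∑ j ∈ Finset.Icc 1 i, y (π j)) - sigma N π i := by
    have := Finset.sum_sdiff hIT (f := fun j => y (π j))
    linarith [hcompl, this]
  -- bound the product
  set P : ℝ := ∏ j ∈ Iset N π i, (1 - y (π j) / m) with hP_def
  have hfprop : ∀ j ∈ Iset N π i, 0 ≤ y (π j) / m ∧ y (π j) / m ≤ 1 := by
    intro j hj
    have hj' := hIT hj
    constructor
    · exact div_nonneg (hy0 j hj') (le_of_lt hm0)
    · rw [div_le_one hm0]
      linarith [hy1 j hj', hm1]
  have hP0 : 0 ≤ P := by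
    apply Finset.prod_nonneg
    intro j hj
    linarith [(hfprop j hj).2]
  have hPlb : 1 - (∑ j ∈ Iset N π i, y (π j)) / m ≤ P := by
    have := one_sub_sum_le_prod_one_sub' (Iset N π i) (fun j => y (π j) / m)
      (fun j hj => (hfprop j hj).1) (fun j hj => (hfprop j hj).2)
    rw [← Finset.sum_div] at this
    exact this
  -- conclude
  have hmain : m * (1 - P)
      ≤ min m ((∑ j ∈ Finset.Icc 1 i, y (π j)) - sigma N π i) := by
    apply le_min
    · nlinarith [hP0, hm0]
    · have h1 : m * (1 - P) ≤ m * ((∑ j ∈ Iset N π i, y (π j)) / m) := by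
        apply mul_le_mul_of_nonneg_left _ (le_of_lt hm0)
        linarith [hPlb]
      rw [mul_div_cancel₀ _ (ne_of_gt hm0)] at h1
      linarith [hIsum]
  calc alpha c π i * m * (1 - P)
      = alpha c π i * (m * (1 - P)) := by ring
    _ ≤ alpha c π i * min m ((∑ j ∈ Finset.Icc 1 i, y (π j)) - sigma N π i) :=
        mul_le_mul_of_nonneg_left hmain hα

end ACAI
end

section
/- For every fractional cache state y, the caching gain is at most (1 − 1/e)^{−1} times the auxiliary gain: G(y) ≤ (1 − 1/e)^{−1} · L(y). -/
namespace ACAI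

section AuxLemmas

private lemma acai_minexp (t : ℝ) (ht : 0 ≤ t) :
    (1 - 1 / Real.exp 1) * min 1 t ≤ 1 - Real.exp (-t) := by
  have he : Real.exp (-1) = 1 / Real.exp 1 := by rw [Real.exp_neg]; ring
  rcases le_total t 1 with h1 | h1
  · have hc := convexOn_exp.2 (Set.mem_univ (0:ℝ)) (Set.mem_univ (-1:ℝ))
      (by linarith : (0:ℝ) ≤ 1 - t) ht (by ring)
    simp only [smul_eq_mul, Real.exp_zero] at hc
    have : Real.exp (-t) ≤ (1 - t) * 1 + t * Real.exp (-1) := by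
      have : (1-t) * 0 + t * (-1) = -t := by ring
      rw [this] at hc; linarith [hc]
    rw [min_eq_right h1]
    rw [he] at this
    nlinarith
  · rw [min_eq_left h1]
    have : Real.exp (-t) ≤ Real.exp (-1) := Real.exp_le_exp.mpr (by linarith)
    rw [he] at this; linarith

private lemma acai_core (b : ℝ) (hb : 1 ≤ b) (I : Finset ℕ) (w : ℕ → ℝ)
    (hw : ∀ j ∈ I, w j ∈ Set.Icc (0:ℝ) 1) :
    (1 - 1 / Real.exp 1) * min b (∑ j ∈ I, w j) ≤
      b * (1 - ∏ j ∈ I, (1 - w j / b)) := by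
  have hb0 : (0:ℝ) < b := lt_of_lt_of_le one_pos hb
  set T := ∑ j ∈ I, w j with hT
  have hT0 : 0 ≤ T := Finset.sum_nonneg fun j hj => (hw j hj).1
  have hP : ∏ j ∈ I, (1 - w j / b) ≤ Real.exp (-(T / b)) := by
    have h1 : ∏ j ∈ I, (1 - w j / b) ≤ ∏ j ∈ I, Real.exp (-(w j / b)) := by
      apply Finset.prod_le_prod
      · intro j hj
        have h2 := (hw j hj).2
        have : w j / b ≤ 1 := by
          rw [div_le_one hb0]; linarith
        linarith
      · intro j hj
        have := Real.add_one_le_exp (-(w j / b))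
        linarith
    rw [← Real.exp_sum] at h1
    have : ∑ j ∈ I, -(w j / b) = -(T / b) := by
      rw [hT, Finset.sum_div, ← Finset.sum_neg_distrib]
    rwa [this] at h1
  have hmain := acai_minexp (T / b) (div_nonneg hT0 hb0.le)
  have hmin : min b T = b * min 1 (T / b) := by
    rcases le_total b T with h | h
    · rw [min_eq_left h, min_eq_left (by rw [le_div_iff₀ hb0]; linarith), mul_one]
    · rw [min_eq_right h, min_eq_right (by rw [div_le_one hb0]; linarith),
        mul_div_cancel₀ _ hb0.ne']
  rw [hmin]
  have step : b * (1 - Real.exp (-(T/b))) ≤ b * (1 - ∏ j ∈ I, (1 - w j / b)) := by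
    apply mul_le_mul_of_nonneg_left (by linarith) hb0.le
  calc (1 - 1 / Real.exp 1) * (b * min 1 (T / b))
      = b * ((1 - 1 / Real.exp 1) * min 1 (T / b)) := by ring
    _ ≤ b * (1 - Real.exp (-(T/b))) := mul_le_mul_of_nonneg_left hmain hb0.le
    _ ≤ _ := step

private lemma acai_sigma_succ_le (N : ℕ) (π : ℕ → ℕ) (i : ℕ) :
    sigma N π (i + 1) ≤ sigma N π i + 1 := by
  unfold sigma
  have hsub : (Finset.Icc 1 (i+1)).filter (fun j => N < π j) ⊆
      insert (i+1) ((Finset.Icc 1 i).filter (fun j => N < π j)) := by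
    intro x hx
    simp only [Finset.mem_filter, Finset.mem_Icc, Finset.mem_insert] at *
    rcases eq_or_ne x (i+1) with h | h
    · exact Or.inl h
    · exact Or.inr ⟨⟨hx.1.1, by omega⟩, hx.2⟩
  calc _ ≤ (insert (i+1) ((Finset.Icc 1 i).filter (fun j => N < π j))).card :=
        Finset.card_le_card hsub
    _ ≤ _ := Finset.card_insert_le _ _

private lemma acai_sigma_lt_of_lt_Kmin (N k : ℕ) (π : ℕ → ℕ) (hk : 0 < k) :
    ∀ i, i < Kmin N k π → sigma N π i < k := by
  intro i
  induction i with
  | zero => intro _; simpa [sigma] using hk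
  | succ n ih =>
    intro hlt
    have h1 : sigma N π (n+1) ≠ k := by
      intro heq
      have hle : Kmin N k π ≤ n + 1 :=
        Nat.sInf_le (by exact heq : n+1 ∈ {i | sigma N π i = k})
      omega
    have h2 := ih (by omega)
    have h3 := acai_sigma_succ_le N π n
    omega

private lemma acai_sigma_2N (N : ℕ) (π : ℕ → ℕ)
    (hbij : Set.BijOn π (Set.Icc 1 (2 * N)) (Set.Icc 1 (2 * N))) :
    sigma N π (2 * N) = N := by
  unfold sigma
  have hcard : ((Finset.Icc 1 (2*N)).filter (fun j => N < π j)).card =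
      ((Finset.Icc 1 (2*N)).filter (fun x => N < x)).card := by
    apply Finset.card_bij (fun a _ => π a)
    · intro a ha
      simp only [Finset.mem_filter, Finset.mem_Icc] at *
      have := hbij.mapsTo (Set.mem_Icc.mpr ⟨ha.1.1, ha.1.2⟩)
      exact ⟨⟨this.1, this.2⟩, ha.2⟩
    · intro a ha b hb hab
      simp only [Finset.mem_filter, Finset.mem_Icc] at ha hb
      exact hbij.injOn (Set.mem_Icc.mpr ha.1) (Set.mem_Icc.mpr hb.1) hab
    · intro b hb
      simp only [Finset.mem_filter, Finset.mem_Icc] at hb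
      obtain ⟨a, ha, hab⟩ := hbij.surjOn (Set.mem_Icc.mpr hb.1)
      refine ⟨a, ?_, hab⟩
      simp only [Finset.mem_filter, Finset.mem_Icc]
      rw [Set.mem_Icc] at ha
      exact ⟨⟨ha.1, ha.2⟩, by rw [hab]; exact hb.2⟩
  rw [hcard]
  have : (Finset.Icc 1 (2*N)).filter (fun x => N < x) = Finset.Icc (N+1) (2*N) := by
    ext x; simp only [Finset.mem_filter, Finset.mem_Icc]; omega
  rw [this, Nat.card_Icc]; omega

private lemma acai_Kmin_le (N k : ℕ) (π : ℕ → ℕ) (hk : 0 < k) (hkN : k ≤ N)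
    (hbij : Set.BijOn π (Set.Icc 1 (2 * N)) (Set.Icc 1 (2 * N))) :
    Kmin N k π ≤ 2 * N := by
  by_contra hc
  have := acai_sigma_lt_of_lt_Kmin N k π hk (2*N) (by omega)
  rw [acai_sigma_2N N π hbij] at this
  omega

private lemma acai_sum_sub_sigma_le (N : ℕ) (π : ℕ → ℕ) (y : ℕ → ℝ)
    (hbij : Set.BijOn π (Set.Icc 1 (2 * N)) (Set.Icc 1 (2 * N)))
    (hy1 : ∀ m ∈ Finset.Icc 1 (2 * N), y m ∈ Set.Icc (0 : ℝ) 1)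
    (hy3 : ∀ m ∈ Finset.Icc 1 N, y (m + N) = 1 - y m)
    (i : ℕ) (hi : i < 2 * N) :
    (∑ j ∈ Finset.Icc 1 i, y (π j)) - (sigma N π i : ℝ) ≤
      ∑ j ∈ Iset N π i, y (π j) := by
  classical
  set A := Finset.Icc 1 i with hA
  set B := A.filter (fun j => N < π j) with hB
  set C := A.filter (fun j => π j ≤ N ∧ ∃ l ∈ A, π l = π j + N) with hC
  have hA2N : ∀ j ∈ A, j ∈ Set.Icc 1 (2 * N) := by
    intro j hj; rw [Finset.mem_Icc] at hj; exact Set.mem_Icc.mpr ⟨hj.1, by omega⟩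
  have hsplit1 : ∑ j ∈ A, y (π j) =
      ∑ j ∈ A.filter (fun j => π j ≤ N), y (π j) + ∑ j ∈ B, y (π j) := by
    rw [hB]
    have : (A.filter fun j => N < π j) = A.filter (fun j => ¬ π j ≤ N) := by
      apply Finset.filter_congr; intro j _; simp [not_le]
    rw [this, Finset.sum_filter_add_sum_filter_not]
  have hsplit2 : ∑ j ∈ A.filter (fun j => π j ≤ N), y (π j) =
      ∑ j ∈ Iset N π i, y (π j) + ∑ j ∈ C, y (π j) := by
    have hIeq : Iset N π i =
        (A.filter (fun j => π j ≤ N)).filter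
          (fun j => ∀ l ∈ A, π l ≠ π j + N) := by
      rw [Finset.filter_filter]; ext j; simp [Iset, hA]
    have hCeq : C = (A.filter (fun j => π j ≤ N)).filter
        (fun j => ¬ ∀ l ∈ A, π l ≠ π j + N) := by
      rw [Finset.filter_filter]
      apply Finset.filter_congr; intro j _
      simp only [not_forall, exists_prop]
      constructor
      · rintro ⟨h1, l, hl, he⟩; exact ⟨h1, l, hl, by simp [he]⟩
      · rintro ⟨h1, l, hl, he⟩; exact ⟨h1, l, hl, by simpa using he⟩
    rw [hIeq, hCeq, Finset.sum_filter_add_sum_filter_not]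
  set f : ℕ → ℕ := fun j => Function.invFunOn π (Set.Icc 1 (2 * N)) (π j + N) with hf
  have hCfact : ∀ j ∈ C, π (f j) = π j + N ∧ f j ∈ B ∧ 1 ≤ π j := by
    intro j hj
    rw [hC, Finset.mem_filter] at hj
    obtain ⟨hjA, hjN, l, hlA, hl⟩ := hj
    have hl2N := hA2N l hlA
    have hj2N := hA2N j hjA
    have hex : ∃ a ∈ Set.Icc 1 (2 * N), π a = π j + N := ⟨l, hl2N, hl⟩
    have hfj : π (f j) = π j + N := Function.invFunOn_eq hex
    have hfjmem : f j ∈ Set.Icc 1 (2 * N) := Function.invFunOn_mem hex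
    have hπj1 : 1 ≤ π j := (hbij.mapsTo hj2N).1
    have hfl : f j = l := hbij.injOn hfjmem hl2N (by rw [hfj, hl])
    refine ⟨hfj, ?_, hπj1⟩
    rw [hB, Finset.mem_filter]
    exact ⟨hfl ▸ hlA, by omega⟩
  have hinj : Set.InjOn f C := by
    intro a ha b hb hab
    have hfa := (hCfact a ha).1
    have hfb := (hCfact b hb).1
    have : π a = π b := by
      have := hab ▸ hfa
      rw [hfb] at this; omega
    rw [Finset.mem_coe, hC, Finset.mem_filter] at ha hb
    exact hbij.injOn (hA2N a ha.1) (hA2N b hb.1) this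
  have h1 : ∑ j ∈ C, y (π j) = (C.card : ℝ) - ∑ j ∈ C, y (π (f j)) := by
    have : ∀ j ∈ C, y (π j) = 1 - y (π (f j)) := by
      intro j hj
      obtain ⟨hfj, _, hπj1⟩ := hCfact j hj
      rw [hC, Finset.mem_filter] at hj
      have hy3' := hy3 (π j) (Finset.mem_Icc.mpr ⟨hπj1, hj.2.1⟩)
      rw [hfj, hy3']; ring
    rw [Finset.sum_congr rfl this, Finset.sum_sub_distrib, Finset.sum_const,
      nsmul_eq_mul, mul_one]
  have h2 : ∑ j ∈ C, y (π (f j)) = ∑ l ∈ C.image f, y (π l) := by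
    rw [Finset.sum_image]
    intro a ha b hb hab
    exact hinj (Finset.mem_coe.mpr ha) (Finset.mem_coe.mpr hb) hab
  have himg : C.image f ⊆ B := by
    intro l hl
    rw [Finset.mem_image] at hl
    obtain ⟨j, hj, hjl⟩ := hl
    exact hjl ▸ (hCfact j hj).2.1
  have h3 : ∑ l ∈ B \ C.image f, y (π l) + ∑ l ∈ C.image f, y (π l) =
      ∑ l ∈ B, y (π l) := Finset.sum_sdiff himg
  have h4 : ∑ l ∈ B \ C.image f, y (π l) ≤ ((B \ C.image f).card : ℝ) := by
    have := Finset.sum_le_card_nsmul (B \ C.image f) (fun l => y (π l)) 1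
      (by intro l hl
          have hlB : l ∈ B := (Finset.sdiff_subset) hl
          rw [hB, Finset.mem_filter] at hlB
          exact (hy1 (π l) (Finset.mem_Icc.mpr
            ⟨(hbij.mapsTo (hA2N l hlB.1)).1, (hbij.mapsTo (hA2N l hlB.1)).2⟩)).2)
    simpa using this
  have hcards : (B \ C.image f).card + (C.image f).card = B.card :=
    Finset.card_sdiff_add_card_eq_card himg
  have hcardimg : (C.image f).card = C.card := Finset.card_image_of_injOn hinj
  have hBC : ∑ l ∈ B, y (π l) + ∑ j ∈ C, y (π j) ≤ (B.card : ℝ) := by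
    have hc : ((B \ C.image f).card : ℝ) + (C.card : ℝ) = (B.card : ℝ) := by
      rw [← hcardimg]; exact_mod_cast congrArg (Nat.cast (R := ℝ)) hcards
    linarith [h1, h2, h3, h4, hc]
  have hsig : (sigma N π i : ℝ) = (B.card : ℝ) := rfl
  rw [hsig]
  linarith [hsplit1, hsplit2, hBC]

end AuxLemmas

/-- **Upper bound (Proposition 1, second inequality).**
For every fractional cache state `y`, the caching gain is at most `(1 - 1/e)⁻¹` times
the auxiliary gain: `G(y) ≤ (1 - 1/e)⁻¹ · L(y)`. -/
theorem gain_le_inv_aux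
    (N k h : ℕ) (hN : 0 < N) (hk : 0 < k) (hkh : k ≤ h) (hhN : h ≤ N)
    (cf : ℝ) (hcf : 0 < cf) (c : ℕ → ℝ) (π : ℕ → ℕ)
    (hreq : Request N cf c π)
    (y : ℕ → ℝ) (hy : IsFrac N h y) :
    gain N k c π y ≤ (1 - 1 / Real.exp 1)⁻¹ * aux N k c π y := by
  classical
  obtain ⟨hc0, hcN, hbij, hord, hpair⟩ := hreq
  obtain ⟨hy1, hy2, hy3⟩ := hy
  have h1e : 1 < Real.exp 1 := by
    have := Real.exp_one_gt_d9; norm_num at this; linarith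
  have hpos : 0 < 1 - 1 / Real.exp 1 := by
    have : 1 / Real.exp 1 < 1 := by
      rw [div_lt_one (by positivity)]; exact h1e
    linarith
  rw [aux, gain, Finset.mul_sum]
  apply Finset.sum_le_sum
  intro i hi
  rw [Finset.mem_Icc] at hi
  have hiK : i < Kmin N k π := by omega
  have hK2N : Kmin N k π ≤ 2 * N := acai_Kmin_le N k π hk (le_trans hkh hhN) hbij
  have hi2N : i < 2 * N := by omega
  have hσ : sigma N π i < k := acai_sigma_lt_of_lt_Kmin N k π hk i hiK
  have hα : 0 ≤ alpha c π i := by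
    have := hord i hi.1 hi2N
    unfold alpha; linarith
  set b : ℝ := (k : ℝ) - sigma N π i with hbdef
  have hb1 : 1 ≤ b := by
    rw [hbdef]
    have : (sigma N π i : ℝ) + 1 ≤ (k : ℝ) := by exact_mod_cast hσ
    linarith
  have hw : ∀ j ∈ Iset N π i, y (π j) ∈ Set.Icc (0:ℝ) 1 := by
    intro j hj
    simp only [Iset, Finset.mem_filter, Finset.mem_Icc] at hj
    have hj2N : j ∈ Set.Icc 1 (2 * N) := Set.mem_Icc.mpr ⟨hj.1.1, by omega⟩
    have := hbij.mapsTo hj2N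
    exact hy1 (π j) (Finset.mem_Icc.mpr ⟨this.1, this.2⟩)
  have hST := acai_sum_sub_sigma_le N π y hbij hy1 hy3 i hi2N
  have hcore := acai_core b hb1 (Iset N π i) (fun j => y (π j)) hw
  have hmin1 : min b ((∑ j ∈ Finset.Icc 1 i, y (π j)) - (sigma N π i : ℝ)) ≤
      min b (∑ j ∈ Iset N π i, y (π j)) := min_le_min le_rfl hST
  have hmin2 : min b (∑ j ∈ Iset N π i, y (π j)) ≤
      (1 - 1 / Real.exp 1)⁻¹ * (b * (1 - ∏ j ∈ Iset N π i, (1 - y (π j) / b))) := by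
    rw [le_inv_mul_iff₀ hpos]
    simpa using hcore
  calc alpha c π i * min b ((∑ j ∈ Finset.Icc 1 i, y (π j)) - (sigma N π i : ℝ))
      ≤ alpha c π i *
        ((1 - 1 / Real.exp 1)⁻¹ * (b * (1 - ∏ j ∈ Iset N π i, (1 - y (π j) / b)))) :=
        mul_le_mul_of_nonneg_left (le_trans hmin1 hmin2) hα
    _ = (1 - 1 / Real.exp 1)⁻¹ *
        (alpha c π i * b * (1 - ∏ j ∈ Iset N π i, (1 - y (π j) / b))) := by ring


end ACAI
end

section
/- Let m be a natural number, c > 0 a real number, and y₁,…,y_m real numbers with 0 ≤ y_j ≤ c for all j. Then min{ c, ∑_{j=1}^{m} y_j } ≤ (1 − 1/e)^{−1} · c · ( 1 − ∏_{j=1}^{m} (1 − y_j/c) ). -/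
/-- **Multilinear upper bound on the truncated sum (Lemma E.8).**
Let `c > 0` and `y 1, …, y m ∈ [0, c]`.  Then
`min c (∑ j, y j) ≤ (1 - 1/e)⁻¹ · c · (1 - ∏ j, (1 - y j / c))`. -/
theorem min_le_multilinear
    (m : ℕ) (c : ℝ) (hc : 0 < c) (y : Fin m → ℝ)
    (hy : ∀ j, 0 ≤ y j ∧ y j ≤ c) :
    min c (∑ j, y j) ≤ (1 - 1 / Real.exp 1)⁻¹ * (c * (1 - ∏ j, (1 - y j / c))) := by
  have hexp1 : (1:ℝ) < Real.exp 1 := by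
    have := Real.exp_one_gt_d9; linarith
  have he : (0:ℝ) < 1 - 1 / Real.exp 1 := by
    have h0 : (0:ℝ) < Real.exp 1 := Real.exp_pos 1
    rw [sub_pos, div_lt_one h0]; exact hexp1
  set S := ∑ j, y j with hS
  have hS0 : 0 ≤ S := Finset.sum_nonneg fun j _ => (hy j).1
  -- product bound
  have hP : ∏ j, (1 - y j / c) ≤ Real.exp (-(S / c)) := by
    calc ∏ j, (1 - y j / c) ≤ ∏ j, Real.exp (-(y j / c)) := by
          apply Finset.prod_le_prod
          · intro j _
            have := (hy j).2
            have : y j / c ≤ 1 := (div_le_one hc).2 this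
            linarith
          · intro j _
            have := Real.add_one_le_exp (-(y j / c))
            linarith
      _ = Real.exp (∑ j, -(y j / c)) := (Real.exp_sum _ _).symm
      _ = Real.exp (-(S / c)) := by
          congr 1
          rw [hS, Finset.sum_div, ← Finset.sum_neg_distrib]
  have key : (1 - 1 / Real.exp 1) * min c S ≤ c * (1 - Real.exp (-(S / c))) := by
    rcases le_or_gt c S with h | h
    · rw [min_eq_left h]
      have h1 : (1:ℝ) ≤ S / c := (one_le_div hc).2 h
      have hinv : Real.exp (-1) = 1 / Real.exp 1 := by
        rw [Real.exp_neg, one_div]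
      have : Real.exp (-(S / c)) ≤ 1 / Real.exp 1 := by
        have h2 : Real.exp (-(S / c)) ≤ Real.exp (-1) := Real.exp_le_exp.2 (by linarith)
        rw [hinv] at h2; exact h2
      nlinarith
    · rw [min_eq_right h.le]
      set t := S / c with ht
      have ht0 : 0 ≤ t := div_nonneg hS0 hc.le
      have ht1 : t ≤ 1 := (div_le_one hc).2 h.le
      -- convexity of exp
      have hconv := convexOn_exp.2 (Set.mem_univ (0:ℝ)) (Set.mem_univ (-1:ℝ))
        (by linarith : (0:ℝ) ≤ 1 - t) ht0 (by ring)
      simp only [smul_eq_mul, mul_zero, mul_neg, mul_one, zero_add, Real.exp_zero] at hconv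
      have hinv : Real.exp (-1) = 1 / Real.exp 1 := by rw [Real.exp_neg, one_div]
      rw [hinv] at hconv
      -- hconv : Real.exp (-t) ≤ (1 - t) * 1 + t * (1 / Real.exp 1)
      have hSt : S = c * t := by rw [ht]; field_simp
      nlinarith
  rw [le_inv_mul_iff₀ he]
  calc (1 - 1 / Real.exp 1) * min c S ≤ c * (1 - Real.exp (-(S / c))) := key
    _ ≤ c * (1 - ∏ j, (1 - y j / c)) := by nlinarith
end
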